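/- For every integer n ≥ 3 and every positive integer t, the number of points x ∈ ℤ⁴ lying in the dilate t·P(4,n) equals (n⁴ − 3n² − 4n − 9/4)·t⁴ + (4n³ − 3n² − 6n − 5/2)·t³ + (6n² − 6n − 9/4)·t² + (4n − 3)·t + 1, as an equality of real numbers. -/

import Mathlib

open scoped Pointwise
open Finset

/-- The vertex set of the partial permutohedron: vectors in `{0,1,…,n}^m`
whose nonzero entries are pairwise distinct. -/
def ppVertices (m n : ℕ) : Set (Fin m → ℝ) :=
  {x | (∀ i, ∃ k : ℕ, k ≤ n ∧ x i = k) ∧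
       ∀ i j : Fin m, i ≠ j → x i ≠ 0 → x j ≠ 0 → x i ≠ x j}

/-- The partial permutohedron `P(m,n)`. -/
def partialPermutohedron (m n : ℕ) : Set (Fin m → ℝ) :=
  convexHull ℝ (ppVertices m n)

/-- The number of lattice points in the dilate `t·P(m,n)`. -/
noncomputable def latticeCount (m n t : ℕ) : ℕ :=
  {x : Fin m → ℤ | (fun i => (x i : ℝ)) ∈ (t : ℝ) • partialPermutohedron m n}.ncard

namespace EhrhartAux

/-- The halfspace description. -/
def Qset (n : ℕ) : Set (Fin 4 → ℝ) :=
  {x | (∀ i, 0 ≤ x i) ∧ ∀ S : Finset (Fin 4),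
    ∑ i ∈ S, x i ≤ (S.card : ℝ) * n - (S.card : ℝ) * ((S.card : ℝ) - 1)/2}

/-- Sum of distinct naturals bounded by n. -/
lemma sum_distinct_bound (n : ℕ) : ∀ (T : Finset ℕ), (∀ v ∈ T, v ≤ n) →
    ∑ v ∈ T, v ≤ ∑ j ∈ Finset.range T.card, (n - j) := by
  induction n with
  | zero =>
    intro T hT
    have : ∑ v ∈ T, v = 0 := Finset.sum_eq_zero fun v hv => Nat.le_zero.1 (hT v hv)
    omega
  | succ n ih =>
    intro T hT
    by_cases hmem : (n+1) ∈ T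
    · have h' : ∀ v ∈ T.erase (n+1), v ≤ n := by
        intro v hv
        have h1 := Finset.ne_of_mem_erase hv
        have h2 := hT v (Finset.mem_of_mem_erase hv)
        omega
      have hcard : (T.erase (n+1)).card = T.card - 1 := Finset.card_erase_of_mem hmem
      have hc1 : 1 ≤ T.card := Finset.card_pos.2 ⟨_, hmem⟩
      have hih := ih (T.erase (n+1)) h'
      have hsum : ∑ v ∈ T.erase (n+1), v + (n+1) = ∑ v ∈ T, v :=
        Finset.sum_erase_add T _ hmem
      obtain ⟨c, hc⟩ : ∃ c, T.card = c + 1 := ⟨T.card - 1, by omega⟩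
      rw [hc, Finset.sum_range_succ']
      have : ∑ j ∈ Finset.range c, (n + 1 - (j+1)) = ∑ j ∈ Finset.range c, (n - j) :=
        Finset.sum_congr rfl fun j _ => by omega
      rw [this]
      rw [hcard, hc] at hih
      simp only [Nat.add_sub_cancel] at hih
      omega
    · have h' : ∀ v ∈ T, v ≤ n := by
        intro v hv
        have := hT v hv
        rcases Nat.lt_or_ge v (n+1) with h | h
        · omega
        · exact absurd (by omega : v = n + 1) (fun e => hmem (e ▸ hv))
      calc ∑ v ∈ T, v ≤ ∑ j ∈ Finset.range T.card, (n - j) := ih T h'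
        _ ≤ ∑ j ∈ Finset.range T.card, (n + 1 - j) :=
            Finset.sum_le_sum fun j _ => by omega

lemma range_sum_cast {n : ℕ} (hn : 3 ≤ n) {s : ℕ} (hs : s ≤ 4) :
    ((∑ j ∈ Finset.range s, (n - j) : ℕ) : ℝ)
      = (s : ℝ) * n - (s : ℝ) * ((s : ℝ) - 1)/2 := by
  interval_cases s <;>
    simp [Finset.sum_range_succ, Nat.cast_sub (show 1 ≤ n by omega),
      Nat.cast_sub (show 2 ≤ n by omega), Nat.cast_sub (show 3 ≤ n by omega)] <;>
    push_cast <;> ring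

lemma vertices_subset_Qset {n : ℕ} (hn : 3 ≤ n) : ppVertices 4 n ⊆ Qset n := by
  rintro x ⟨h1, h2⟩
  choose k hk hxk using h1
  have hkinj : ∀ i ∈ Finset.univ.filter (fun i => k i ≠ 0), ∀ j ∈ Finset.univ.filter (fun i => k i ≠ 0),
      k i = k j → i = j := by
    intro i hi j hj hij
    simp only [Finset.mem_filter] at hi hj
    by_contra hne
    refine h2 i j hne ?_ ?_ ?_
    · rw [hxk i]; exact_mod_cast Nat.cast_ne_zero.2 hi.2
    · rw [hxk j]; exact_mod_cast Nat.cast_ne_zero.2 hj.2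
    · rw [hxk i, hxk j]; exact_mod_cast Nat.cast_inj.2 hij
  refine ⟨fun i => by rw [hxk i]; positivity, fun S => ?_⟩
  have hS4 : S.card ≤ 4 := le_trans (Finset.card_le_univ S) (by simp)
  set S' := S.filter (fun i => k i ≠ 0) with hS'
  have hsum : ∑ i ∈ S, x i = ((∑ i ∈ S', k i : ℕ) : ℝ) := by
    rw [← Finset.sum_filter_add_sum_filter_not S (fun i => k i ≠ 0)]
    push_cast
    have hz : ∑ i ∈ S.filter (fun i => ¬ k i ≠ 0), x i = 0 := by
      refine Finset.sum_eq_zero fun i hi => ?_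
      simp only [Finset.mem_filter, not_not] at hi
      rw [hxk i, hi.2]; simp
    rw [hz, add_zero]
    exact Finset.sum_congr rfl fun i _ => hxk i
  have hinj' : ∀ i ∈ S', ∀ j ∈ S', k i = k j → i = j := by
    intro i hi j hj
    simp only [hS', Finset.mem_filter] at hi hj
    exact fun h => hkinj i (by simp [hi.2]) j (by simp [hj.2]) h
  have himg : ∑ i ∈ S', k i = ∑ v ∈ S'.image k, v :=
    (Finset.sum_image (f := fun v => v) hinj').symm
  have hTbound := sum_distinct_bound n (S'.image k) (fun v hv => by
    obtain ⟨i, _, rfl⟩ := Finset.mem_image.1 hv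
    exact hk i)
  have hcards : (S'.image k).card = S'.card := Finset.card_image_of_injOn hinj'
  have hcard_le : S'.card ≤ S.card := Finset.card_filter_le _ _
  have hmono : ∑ j ∈ Finset.range (S'.image k).card, (n - j)
      ≤ ∑ j ∈ Finset.range S.card, (n - j) := by
    apply Finset.sum_le_sum_of_subset
    apply Finset.range_subset_range.2
    omega
  rw [hsum, himg]
  calc ((∑ v ∈ S'.image k, v : ℕ) : ℝ)
      ≤ ((∑ j ∈ Finset.range S.card, (n - j) : ℕ) : ℝ) := by exact_mod_cast le_trans hTbound hmono
    _ = (S.card : ℝ) * n - (S.card : ℝ) * ((S.card : ℝ) - 1)/2 := range_sum_cast hn hS4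

lemma Qset_convex (n : ℕ) : Convex ℝ (Qset n) := by
  intro x hx y hy α β hα hβ hαβ
  refine ⟨fun i => ?_, fun S => ?_⟩
  · have := hx.1 i; have := hy.1 i
    simp only [Pi.add_apply, Pi.smul_apply, smul_eq_mul]
    nlinarith
  · have h1 := hx.2 S; have h2 := hy.2 S
    simp only [Pi.add_apply, Pi.smul_apply, smul_eq_mul]
    rw [Finset.sum_add_distrib, ← Finset.mul_sum, ← Finset.mul_sum]
    have h3 : α * ((S.card : ℝ) * n - (S.card : ℝ) * ((S.card : ℝ) - 1)/2)
        + β * ((S.card : ℝ) * n - (S.card : ℝ) * ((S.card : ℝ) - 1)/2)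
        = (S.card : ℝ) * n - (S.card : ℝ) * ((S.card : ℝ) - 1)/2 := by
      rw [← add_mul, hαβ, one_mul]
    nlinarith [mul_le_mul_of_nonneg_left h1 hα, mul_le_mul_of_nonneg_left h2 hβ]

lemma ppVertices_finite (n : ℕ) : (ppVertices 4 n).Finite := by
  have hfin : (Set.pi Set.univ (fun _ : Fin 4 => ((fun k : ℕ => (k : ℝ)) '' (Set.Iic n)))).Finite :=
    Set.Finite.pi (fun _ => (Set.finite_Iic n).image _)
  refine hfin.subset fun x hx => ?_
  intro i _
  obtain ⟨k, hk, hxk⟩ := hx.1 i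
  exact ⟨k, hk, hxk.symm⟩

lemma Qset_subset_hull {n : ℕ} (hn : 3 ≤ n) : Qset n ⊆ convexHull ℝ (ppVertices 4 n) := by
  intro x hx
  by_contra hnot
  have hclosed : IsClosed (convexHull ℝ (ppVertices 4 n)) :=
    ((ppVertices_finite n).isCompact_convexHull ℝ).isClosed
  obtain ⟨f, u, hfu, hux⟩ :=
    geometric_hahn_banach_closed_point (convex_convexHull ℝ _) hclosed hnot
  set c : Fin 4 → ℝ := fun i => f (fun j => if i = j then (1:ℝ) else 0) with hc
  have hfy : ∀ y : Fin 4 → ℝ, f y = ∑ i, y i * c i := by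
    intro y
    have := LinearMap.pi_apply_eq_sum_univ (f : (Fin 4 → ℝ) →ₗ[ℝ] ℝ) y
    simpa [smul_eq_mul] using this
  set σ : Equiv.Perm (Fin 4) := Tuple.sort (fun i => -c i) with hσ
  have hmono : Monotone ((fun i => -c i) ∘ σ) := Tuple.monotone_sort _
  set d : Fin 4 → ℝ := fun k => c (σ k) with hd
  have hd01 : d 1 ≤ d 0 := by have := hmono (show (0:Fin 4) ≤ 1 by decide); simpa [hd] using this
  have hd12 : d 2 ≤ d 1 := by have := hmono (show (1:Fin 4) ≤ 2 by decide); simpa [hd] using this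
  have hd23 : d 3 ≤ d 2 := by have := hmono (show (2:Fin 4) ≤ 3 by decide); simpa [hd] using this
  -- the greedy vertex
  set v : Fin 4 → ℝ := fun i => if 0 < c i then ((n - ((σ.symm i : Fin 4) : ℕ) : ℕ) : ℝ) else 0 with hv
  have hvmem : v ∈ ppVertices 4 n := by
    constructor
    · intro i
      by_cases hci : 0 < c i
      · exact ⟨n - (σ.symm i : ℕ), Nat.sub_le _ _, by simp [hv, hci]⟩
      · exact ⟨0, Nat.zero_le _, by simp [hv, hci]⟩
    · intro i j hij hvi hvj heq
      by_cases hci : 0 < c i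
      · by_cases hcj : 0 < c j
        · simp only [hv, if_pos hci, if_pos hcj] at heq
          have hk1 : ((σ.symm i : Fin 4) : ℕ) < 4 := (σ.symm i).is_lt
          have hk2 : ((σ.symm j : Fin 4) : ℕ) < 4 := (σ.symm j).is_lt
          have hnat : n - ((σ.symm i : Fin 4) : ℕ) = n - ((σ.symm j : Fin 4) : ℕ) :=
            Nat.cast_inj.1 heq
          have hvaleq : ((σ.symm i : Fin 4) : ℕ) = ((σ.symm j : Fin 4) : ℕ) := by omega
          exact hij (by simpa using congrArg σ (Fin.ext hvaleq))
        · exact hvj (by simp [hv, hcj])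
      · exact hvi (by simp [hv, hci])
  -- separating functional bound via greedy vertex
  have hfv_lt : f v < u := hfu v (subset_convexHull ℝ _ hvmem)
  set y : Fin 4 → ℝ := fun k => x (σ k) with hy
  have hy0 : ∀ k, 0 ≤ y k := fun k => hx.1 _
  have hne01 : σ 0 ≠ σ 1 := σ.injective.ne (by decide)
  have hne02 : σ 0 ≠ σ 2 := σ.injective.ne (by decide)
  have hne12 : σ 1 ≠ σ 2 := σ.injective.ne (by decide)
  have h1 := hx.2 {σ 0}
  rw [Finset.sum_singleton, Finset.card_singleton] at h1
  have hm2 : σ 0 ∉ ({σ 1} : Finset (Fin 4)) := by simp [hne01]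
  have h2 := hx.2 {σ 0, σ 1}
  rw [Finset.sum_insert hm2, Finset.sum_singleton,
    Finset.card_insert_of_notMem hm2, Finset.card_singleton] at h2
  have hm3a : σ 0 ∉ ({σ 1, σ 2} : Finset (Fin 4)) := by simp [hne01, hne02]
  have hm3b : σ 1 ∉ ({σ 2} : Finset (Fin 4)) := by simp [hne12]
  have h3 := hx.2 {σ 0, σ 1, σ 2}
  rw [Finset.sum_insert hm3a, Finset.sum_insert hm3b, Finset.sum_singleton,
    Finset.card_insert_of_notMem hm3a, Finset.card_insert_of_notMem hm3b,
    Finset.card_singleton] at h3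
  have h4 := hx.2 Finset.univ
  rw [Finset.card_univ, Fintype.card_fin] at h4
  have hsum4 : y 0 + y 1 + y 2 + y 3 = ∑ i, x i := by
    have hcomp := Equiv.sum_comp σ x
    rw [Fin.sum_univ_four] at hcomp
    exact hcomp
  have h4' : y 0 + y 1 + y 2 + y 3 ≤ (4:ℝ) * n - (4:ℝ) * ((4:ℝ) - 1)/2 := by
    rw [hsum4]; exact_mod_cast h4
  have hfx : f x = y 0 * d 0 + y 1 * d 1 + y 2 * d 2 + y 3 * d 3 := by
    rw [hfy x, ← Equiv.sum_comp σ (fun i => x i * c i), Fin.sum_univ_four]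
  set p : Fin 4 → ℝ := fun k => max (d k) 0 with hp
  have hterm : ∀ k : Fin 4, v (σ k) * c (σ k) = p k * ((n:ℝ) - ((k : Fin 4) : ℕ)) := by
    intro k
    have hcast : ((n - ((k : Fin 4) : ℕ) : ℕ) : ℝ) = (n:ℝ) - ((k : Fin 4) : ℕ) := by
      have : ((k : Fin 4) : ℕ) ≤ n := le_trans (by omega) hn
      push_cast [this]
      ring
    by_cases hk : 0 < d k
    · simp only [hv, hd] at hk ⊢
      rw [if_pos hk, Equiv.symm_apply_apply, hcast, hp]
      simp only [hd]
      rw [max_eq_left hk.le]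
      ring
    · simp only [hv, hd] at hk ⊢
      rw [if_neg hk, hp]
      simp only [hd]
      rw [max_eq_right (le_of_not_gt hk)]
      ring
  have hfveq : f v = p 0 * ((n:ℝ) - 0) + p 1 * ((n:ℝ) - 1) + p 2 * ((n:ℝ) - 2)
      + p 3 * ((n:ℝ) - 3) := by
    rw [hfy v, ← Equiv.sum_comp σ (fun i => v i * c i), Fin.sum_univ_four,
      hterm 0, hterm 1, hterm 2, hterm 3]
    norm_num [show ((0:Fin 4):ℕ) = 0 from rfl, show ((1:Fin 4):ℕ) = 1 from rfl,
      show ((2:Fin 4):ℕ) = 2 from rfl, show ((3:Fin 4):ℕ) = 3 from rfl]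
  have hp0 : ∀ k, 0 ≤ p k := fun k => le_max_right _ _
  have hpd : ∀ k, d k ≤ p k := fun k => le_max_left _ _
  have hp01 : p 1 ≤ p 0 := max_le_max hd01 le_rfl
  have hp12 : p 2 ≤ p 1 := max_le_max hd12 le_rfl
  have hp23 : p 3 ≤ p 2 := max_le_max hd23 le_rfl
  have e1 : 0 ≤ (p 0 - p 1) * ((n:ℝ) - y 0) := by
    have := h1; push_cast at this
    apply mul_nonneg <;> linarith
  have e2 : 0 ≤ (p 1 - p 2) * (2*(n:ℝ) - 1 - (y 0 + y 1)) := by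
    have := h2; push_cast at this
    apply mul_nonneg <;> linarith
  have e3 : 0 ≤ (p 2 - p 3) * (3*(n:ℝ) - 3 - (y 0 + y 1 + y 2)) := by
    have := h3; push_cast at this
    apply mul_nonneg <;> linarith
  have e4 : 0 ≤ p 3 * (4*(n:ℝ) - 6 - (y 0 + y 1 + y 2 + y 3)) := by
    apply mul_nonneg (hp0 3); linarith
  have e5 : 0 ≤ (p 0 - d 0) * y 0 := mul_nonneg (by linarith [hpd 0]) (hy0 0)
  have e6 : 0 ≤ (p 1 - d 1) * y 1 := mul_nonneg (by linarith [hpd 1]) (hy0 1)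
  have e7 : 0 ≤ (p 2 - d 2) * y 2 := mul_nonneg (by linarith [hpd 2]) (hy0 2)
  have e8 : 0 ≤ (p 3 - d 3) * y 3 := mul_nonneg (by linarith [hpd 3]) (hy0 3)
  have hbound : f x ≤ f v := by
    rw [hfx, hfveq]
    have hid : p 0 * ((n:ℝ) - 0) + p 1 * ((n:ℝ) - 1) + p 2 * ((n:ℝ) - 2) + p 3 * ((n:ℝ) - 3)
        - (y 0 * d 0 + y 1 * d 1 + y 2 * d 2 + y 3 * d 3)
      = (p 0 - p 1) * ((n:ℝ) - y 0) + (p 1 - p 2) * (2*(n:ℝ) - 1 - (y 0 + y 1))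
        + (p 2 - p 3) * (3*(n:ℝ) - 3 - (y 0 + y 1 + y 2))
        + p 3 * (4*(n:ℝ) - 6 - (y 0 + y 1 + y 2 + y 3))
        + (p 0 - d 0) * y 0 + (p 1 - d 1) * y 1 + (p 2 - d 2) * y 2 + (p 3 - d 3) * y 3 := by
      ring
    linarith [e1, e2, e3, e4, e5, e6, e7, e8, hid]
  linarith

/-- The halfspace description equals the partial permutohedron. -/
lemma Qset_eq_hull {n : ℕ} (hn : 3 ≤ n) : Qset n = partialPermutohedron 4 n :=
  le_antisymm (Qset_subset_hull hn)
    (convexHull_min (vertices_subset_Qset hn) (Qset_convex n))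





lemma sum_Ioc_eq (p P : ℤ → ℝ) (h : ∀ x : ℤ, P x - P (x-1) = p x) {l u : ℤ} (hlu : l ≤ u) :
    ∑ x ∈ Finset.Ioc l u, p x = P u - P l := by
  obtain ⟨k, hk⟩ : ∃ k : ℕ, u = l + k := ⟨(u-l).toNat, by omega⟩
  subst hk; clear hlu
  induction k with
  | zero => simp
  | succ k ih =>
    have harg : (l + ((k:ℕ)+1:ℕ) : ℤ) = l + k + 1 := by push_cast; ring
    rw [harg]
    have hins : Finset.Ioc l (l + k + 1) = insert (l + k + 1) (Finset.Ioc l (l+(k:ℤ))) := by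
      ext x; simp only [Finset.mem_Ioc, Finset.mem_insert]; omega
    rw [hins, Finset.sum_insert (by simp only [Finset.mem_Ioc]; omega), ih]
    have hp := h (l + k + 1)
    have he : (l + (k:ℤ) + 1 - 1 : ℤ) = l + k := by ring
    rw [he] at hp
    linarith

lemma sum_Ioc_cubic (α β γ δ : ℝ) {l u : ℤ} (hlu : l ≤ u) :
    ∑ x ∈ Finset.Ioc l u, (α + β*(x:ℝ) + γ*(x:ℝ)^2 + δ*(x:ℝ)^3)
      = α*((u:ℝ)-(l:ℝ)) + β*((u:ℝ)*((u:ℝ)+1)-(l:ℝ)*((l:ℝ)+1))/2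
        + γ*((u:ℝ)*((u:ℝ)+1)*(2*(u:ℝ)+1)-(l:ℝ)*((l:ℝ)+1)*(2*(l:ℝ)+1))/6
        + δ*((u:ℝ)^2*((u:ℝ)+1)^2-(l:ℝ)^2*((l:ℝ)+1)^2)/4 := by
  have h := sum_Ioc_eq (fun x : ℤ => α + β*(x:ℝ) + γ*(x:ℝ)^2 + δ*(x:ℝ)^3)
      (fun x : ℤ => α*(x:ℝ) + β*((x:ℝ)*((x:ℝ)+1))/2 + γ*((x:ℝ)*((x:ℝ)+1)*(2*(x:ℝ)+1))/6
        + δ*((x:ℝ)^2*((x:ℝ)+1)^2)/4)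
      (fun x => by push_cast; ring) hlu
  rw [h]; ring

lemma toNat_cast_real {x : ℤ} (h : 0 ≤ x) : ((x.toNat : ℝ)) = (x : ℝ) := by
  rw [← Int.cast_natCast, Int.toNat_of_nonneg h]

lemma sum_Ioc_split (f : ℤ → ℝ) {a b c : ℤ} (h1 : a ≤ b) (h2 : b ≤ c) :
    ∑ x ∈ Finset.Ioc a c, f x = ∑ x ∈ Finset.Ioc a b, f x + ∑ x ∈ Finset.Ioc b c, f x := by
  rw [← Finset.sum_union (by simp only [Finset.disjoint_left, Finset.mem_Ioc]; omega),
    Finset.Ioc_union_Ioc_eq_Ioc h1 h2]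

def Pu (A T a b c d : ℤ) : Prop :=
  T ≤ a+b ∧ T ≤ a+c ∧ T ≤ a+d ∧ T ≤ b+c ∧ T ≤ b+d ∧ T ≤ c+d ∧
  3*T ≤ a+b+c ∧ 3*T ≤ a+b+d ∧ 3*T ≤ a+c+d ∧ 3*T ≤ b+c+d ∧ 6*T ≤ a+b+c+d

instance (A T a b c d : ℤ) : Decidable (Pu A T a b c d) := by unfold Pu; infer_instance

noncomputable def ind (A T a b c d : ℤ) : ℝ := if Pu A T a b c d then 1 else 0

noncomputable def F (A T a b : ℤ) : ℝ :=
  ∑ c ∈ Finset.Ioc (-1:ℤ) A, ∑ d ∈ Finset.Ioc (-1:ℤ) A, ind A T a b c d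

lemma F_zero {A T a b : ℤ} (hab : a + b ≤ T - 1) : F A T a b = 0 := by
  unfold F
  refine Finset.sum_eq_zero fun c _ => Finset.sum_eq_zero fun d _ => ?_
  unfold ind
  rw [if_neg]
  intro h; unfold Pu at h; omega

lemma cd {A T a b M2 K1 : ℤ} (hT : 1 ≤ T) (hA : 3*T ≤ A)
    (ha0 : 0 ≤ a) (haA : a ≤ A) (hb0 : 0 ≤ b) (hbA : b ≤ A) (hab : T ≤ a+b)
    (hM2 : M2 = max (max 0 (T-a)) (max (T-b) (3*T-a-b)))
    (hK1 : K1 = max (max T (3*T-a)) (max (3*T-b) (6*T-a-b))) :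
    F A T a b = ((A:ℝ)+1-(M2:ℝ))^2 - ((K1:ℝ)-2*(M2:ℝ))*((K1:ℝ)-2*(M2:ℝ)+1)/2 := by
  have h1 : (0:ℤ) ≤ M2 := by omega
  have h2 : M2 ≤ K1 - M2 := by omega
  have h3 : K1 - M2 ≤ 3*T := by omega
  -- inner d-sums
  have hd1 : ∀ c ∈ Finset.Ioc (-1:ℤ) (M2-1),
      (∑ d ∈ Finset.Ioc (-1:ℤ) A, ind A T a b c d) = 0 := by
    intro c hc
    simp only [Finset.mem_Ioc] at hc
    refine Finset.sum_eq_zero fun d _ => ?_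
    unfold ind; rw [if_neg]; intro h; unfold Pu at h; omega
  have hd2 : ∀ c ∈ Finset.Ioc (M2-1) (K1-M2),
      (∑ d ∈ Finset.Ioc (-1:ℤ) A, ind A T a b c d) = (A:ℝ)+1-(K1:ℝ)+(c:ℝ) := by
    intro c hc
    simp only [Finset.mem_Ioc] at hc
    unfold ind
    rw [Finset.sum_boole]
    have hfilter : (Finset.Ioc (-1:ℤ) A).filter (fun d => Pu A T a b c d)
        = Finset.Ioc (K1-c-1) A := by
      ext d; simp only [Finset.mem_filter, Finset.mem_Ioc]; unfold Pu; omega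
    rw [hfilter, Int.card_Ioc, toNat_cast_real (by omega)]
    push_cast; ring
  have hd3 : ∀ c ∈ Finset.Ioc (K1-M2) A,
      (∑ d ∈ Finset.Ioc (-1:ℤ) A, ind A T a b c d) = (A:ℝ)+1-(M2:ℝ) := by
    intro c hc
    simp only [Finset.mem_Ioc] at hc
    unfold ind
    rw [Finset.sum_boole]
    have hfilter : (Finset.Ioc (-1:ℤ) A).filter (fun d => Pu A T a b c d)
        = Finset.Ioc (M2-1) A := by
      ext d; simp only [Finset.mem_filter, Finset.mem_Ioc]; unfold Pu; omega
    rw [hfilter, Int.card_Ioc, toNat_cast_real (by omega)]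
    push_cast; ring
  unfold F
  rw [sum_Ioc_split _ (by omega : (-1:ℤ) ≤ M2-1) (by omega : M2-1 ≤ A),
    sum_Ioc_split _ (by omega : M2-1 ≤ K1-M2) (by omega : K1-M2 ≤ A),
    Finset.sum_congr rfl hd1, Finset.sum_congr rfl hd2, Finset.sum_congr rfl hd3]
  have hcg : ∀ c ∈ Finset.Ioc (M2-1) (K1-M2), (A:ℝ)+1-(K1:ℝ)+(c:ℝ)
      = ((A:ℝ)+1-(K1:ℝ)) + 1*(c:ℝ) + 0*(c:ℝ)^2 + 0*(c:ℝ)^3 := by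
    intro c _; ring
  rw [Finset.sum_const_zero, Finset.sum_congr rfl hcg,
    sum_Ioc_cubic _ _ _ _ (by omega : M2-1 ≤ K1-M2), Finset.sum_const, nsmul_eq_mul,
    Int.card_Ioc, toNat_cast_real (by omega)]
  push_cast; ring


lemma bsumI {A T a : ℤ} (hT : 1 ≤ T) (hA : 3*T ≤ A) (ha : 3*T ≤ a ∧ a ≤ A) :
    ∑ b ∈ Finset.Ioc (-1:ℤ) A, F A T a b = (1 + (-3/2)*(T:ℝ) + (-3/2)*(T:ℝ)^2 + (-1)*(T:ℝ)^3 + 3*(A:ℝ) + (-3/2)*(A:ℝ)*(T:ℝ) + (-3/2)*(A:ℝ)*(T:ℝ)^2 + 3*(A:ℝ)^2 + 1*(A:ℝ)^3) := by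
  have hc0 : ∀ b ∈ Finset.Ioc ((-1):ℤ) (T-1), F A T a b
      = (1 + (-5/2)*(T:ℝ) + (1/2)*(T:ℝ)^2 + 2*(A:ℝ) + (-2)*(A:ℝ)*(T:ℝ) + 1*(A:ℝ)^2) + ((3/2) + (-3)*(T:ℝ) + 2*(A:ℝ))*(b:ℝ) + ((1/2))*(b:ℝ)^2 + (0:ℝ)*(b:ℝ)^3 := by
    intro b hb
    simp only [Finset.mem_Ioc] at hb
    rw [cd hT hA (by omega) (by omega) (by omega) (by omega) (by omega)
      (show (T-b : ℤ) = max (max 0 (T-a)) (max (T-b) (3*T-a-b)) by omega)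
      (show (3*T-b : ℤ) = max (max T (3*T-a)) (max (3*T-b) (6*T-a-b)) by omega)]
    push_cast; ring
  have hc1 : ∀ b ∈ Finset.Ioc (T-1:ℤ) (2*T), F A T a b
      = (1 + (-3/2)*(T:ℝ) + (-9/2)*(T:ℝ)^2 + 2*(A:ℝ) + 1*(A:ℝ)^2) + ((1/2) + 3*(T:ℝ))*(b:ℝ) + ((-1/2))*(b:ℝ)^2 + (0:ℝ)*(b:ℝ)^3 := by
    intro b hb
    simp only [Finset.mem_Ioc] at hb
    rw [cd hT hA (by omega) (by omega) (by omega) (by omega) (by omega)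
      (show (0 : ℤ) = max (max 0 (T-a)) (max (T-b) (3*T-a-b)) by omega)
      (show (3*T-b : ℤ) = max (max T (3*T-a)) (max (3*T-b) (6*T-a-b)) by omega)]
    push_cast; ring
  have hc2 : ∀ b ∈ Finset.Ioc (2*T:ℤ) (A), F A T a b
      = (1 + (-1/2)*(T:ℝ) + (-1/2)*(T:ℝ)^2 + 2*(A:ℝ) + 1*(A:ℝ)^2) + (0:ℝ)*(b:ℝ) + (0:ℝ)*(b:ℝ)^2 + (0:ℝ)*(b:ℝ)^3 := by
    intro b hb
    simp only [Finset.mem_Ioc] at hb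
    rw [cd hT hA (by omega) (by omega) (by omega) (by omega) (by omega)
      (show (0 : ℤ) = max (max 0 (T-a)) (max (T-b) (3*T-a-b)) by omega)
      (show (T : ℤ) = max (max T (3*T-a)) (max (3*T-b) (6*T-a-b)) by omega)]
    push_cast; ring
  rw [sum_Ioc_split _ (show ((-1):ℤ) ≤ T-1 by omega) (show (T-1:ℤ) ≤ A by omega), sum_Ioc_split _ (show (T-1:ℤ) ≤ 2*T by omega) (show (2*T:ℤ) ≤ A by omega), Finset.sum_congr rfl hc0, Finset.sum_congr rfl hc1, Finset.sum_congr rfl hc2, sum_Ioc_cubic _ _ _ _ (show ((-1):ℤ) ≤ T-1 by omega), sum_Ioc_cubic _ _ _ _ (show (T-1:ℤ) ≤ 2*T by omega), sum_Ioc_cubic _ _ _ _ (show (2*T:ℤ) ≤ A by omega)]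
  push_cast; ring

lemma bsumII {A T a : ℤ} (hT : 1 ≤ T) (hA : 3*T ≤ A) (ha : 2*T ≤ a ∧ a ≤ 3*T-1) :
    ∑ b ∈ Finset.Ioc (-1:ℤ) A, F A T a b = (1 + (1/3)*(a:ℝ) + (-1/2)*(a:ℝ)^2 + (1/6)*(a:ℝ)^3 + (-5/2)*(T:ℝ) + (9/2)*(T:ℝ)*(a:ℝ) + (-3)*(T:ℝ)*(a:ℝ)^2 + (-21/2)*(T:ℝ)^2 + (33/2)*(T:ℝ)^2*(a:ℝ) + (-28)*(T:ℝ)^3 + 3*(A:ℝ) + (-3/2)*(A:ℝ)*(T:ℝ) + (-3/2)*(A:ℝ)*(T:ℝ)^2 + 3*(A:ℝ)^2 + 1*(A:ℝ)^3) := by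
  have hc0 : ∀ b ∈ Finset.Ioc ((-1):ℤ) (T-1), F A T a b
      = (1 + (1/2)*(a:ℝ) + (-1/2)*(a:ℝ)^2 + (-4)*(T:ℝ) + 4*(T:ℝ)*(a:ℝ) + (-7)*(T:ℝ)^2 + 2*(A:ℝ) + (-2)*(A:ℝ)*(T:ℝ) + 1*(A:ℝ)^2) + ((3/2) + 1*(a:ℝ) + (-6)*(T:ℝ) + 2*(A:ℝ))*(b:ℝ) + ((1/2))*(b:ℝ)^2 + (0:ℝ)*(b:ℝ)^3 := by
    intro b hb
    simp only [Finset.mem_Ioc] at hb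
    rw [cd hT hA (by omega) (by omega) (by omega) (by omega) (by omega)
      (show (T-b : ℤ) = max (max 0 (T-a)) (max (T-b) (3*T-a-b)) by omega)
      (show (6*T-a-b : ℤ) = max (max T (3*T-a)) (max (3*T-b) (6*T-a-b)) by omega)]
    push_cast; ring
  have hc1 : ∀ b ∈ Finset.Ioc (T-1:ℤ) (5*T-a), F A T a b
      = (1 + (1/2)*(a:ℝ) + (-1/2)*(a:ℝ)^2 + (-3)*(T:ℝ) + 6*(T:ℝ)*(a:ℝ) + (-18)*(T:ℝ)^2 + 2*(A:ℝ) + 1*(A:ℝ)^2) + ((1/2) + (-1)*(a:ℝ) + 6*(T:ℝ))*(b:ℝ) + ((-1/2))*(b:ℝ)^2 + (0:ℝ)*(b:ℝ)^3 := by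
    intro b hb
    simp only [Finset.mem_Ioc] at hb
    rw [cd hT hA (by omega) (by omega) (by omega) (by omega) (by omega)
      (show (0 : ℤ) = max (max 0 (T-a)) (max (T-b) (3*T-a-b)) by omega)
      (show (6*T-a-b : ℤ) = max (max T (3*T-a)) (max (3*T-b) (6*T-a-b)) by omega)]
    push_cast; ring
  have hc2 : ∀ b ∈ Finset.Ioc (5*T-a:ℤ) (A), F A T a b
      = (1 + (-1/2)*(T:ℝ) + (-1/2)*(T:ℝ)^2 + 2*(A:ℝ) + 1*(A:ℝ)^2) + (0:ℝ)*(b:ℝ) + (0:ℝ)*(b:ℝ)^2 + (0:ℝ)*(b:ℝ)^3 := by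
    intro b hb
    simp only [Finset.mem_Ioc] at hb
    rw [cd hT hA (by omega) (by omega) (by omega) (by omega) (by omega)
      (show (0 : ℤ) = max (max 0 (T-a)) (max (T-b) (3*T-a-b)) by omega)
      (show (T : ℤ) = max (max T (3*T-a)) (max (3*T-b) (6*T-a-b)) by omega)]
    push_cast; ring
  rw [sum_Ioc_split _ (show ((-1):ℤ) ≤ T-1 by omega) (show (T-1:ℤ) ≤ A by omega), sum_Ioc_split _ (show (T-1:ℤ) ≤ 5*T-a by omega) (show (5*T-a:ℤ) ≤ A by omega), Finset.sum_congr rfl hc0, Finset.sum_congr rfl hc1, Finset.sum_congr rfl hc2, sum_Ioc_cubic _ _ _ _ (show ((-1):ℤ) ≤ T-1 by omega), sum_Ioc_cubic _ _ _ _ (show (T-1:ℤ) ≤ 5*T-a by omega), sum_Ioc_cubic _ _ _ _ (show (5*T-a:ℤ) ≤ A by omega)]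
  push_cast; ring

lemma bsumIII {A T a : ℤ} (hT : 1 ≤ T) (hA : 3*T ≤ A) (ha : T ≤ a ∧ a ≤ 2*T-1) :
    ∑ b ∈ Finset.Ioc (-1:ℤ) A, F A T a b = (1 + (5/6)*(a:ℝ) + (-1/2)*(a:ℝ)^2 + (-1/3)*(a:ℝ)^3 + (-7/2)*(T:ℝ) + (3/2)*(T:ℝ)*(a:ℝ) + 6*(T:ℝ)*(a:ℝ)^2 + (-9/2)*(T:ℝ)^2 + (-45/2)*(T:ℝ)^2*(a:ℝ) + 18*(T:ℝ)^3 + 3*(A:ℝ) + (3/2)*(A:ℝ)*(a:ℝ) + (-3/2)*(A:ℝ)*(a:ℝ)^2 + (-9/2)*(A:ℝ)*(T:ℝ) + 9*(A:ℝ)*(T:ℝ)*(a:ℝ) + (-27/2)*(A:ℝ)*(T:ℝ)^2 + 3*(A:ℝ)^2 + 1*(A:ℝ)^3) := by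
  have hc0 : ∀ b ∈ Finset.Ioc ((-1):ℤ) (3*T-a), F A T a b
      = (1 + (3/2)*(a:ℝ) + (1/2)*(a:ℝ)^2 + (-6)*(T:ℝ) + (-6)*(T:ℝ)*(a:ℝ) + 9*(T:ℝ)^2 + 2*(A:ℝ) + 2*(A:ℝ)*(a:ℝ) + (-6)*(A:ℝ)*(T:ℝ) + 1*(A:ℝ)^2) + ((3/2) + 1*(a:ℝ) + (-6)*(T:ℝ) + 2*(A:ℝ))*(b:ℝ) + ((1/2))*(b:ℝ)^2 + (0:ℝ)*(b:ℝ)^3 := by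
    intro b hb
    simp only [Finset.mem_Ioc] at hb
    rw [cd hT hA (by omega) (by omega) (by omega) (by omega) (by omega)
      (show (3*T-a-b : ℤ) = max (max 0 (T-a)) (max (T-b) (3*T-a-b)) by omega)
      (show (6*T-a-b : ℤ) = max (max T (3*T-a)) (max (3*T-b) (6*T-a-b)) by omega)]
    push_cast; ring
  have hc1 : ∀ b ∈ Finset.Ioc (3*T-a:ℤ) (3*T), F A T a b
      = (1 + (1/2)*(a:ℝ) + (-1/2)*(a:ℝ)^2 + (-3)*(T:ℝ) + 6*(T:ℝ)*(a:ℝ) + (-18)*(T:ℝ)^2 + 2*(A:ℝ) + 1*(A:ℝ)^2) + ((1/2) + (-1)*(a:ℝ) + 6*(T:ℝ))*(b:ℝ) + ((-1/2))*(b:ℝ)^2 + (0:ℝ)*(b:ℝ)^3 := by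
    intro b hb
    simp only [Finset.mem_Ioc] at hb
    rw [cd hT hA (by omega) (by omega) (by omega) (by omega) (by omega)
      (show (0 : ℤ) = max (max 0 (T-a)) (max (T-b) (3*T-a-b)) by omega)
      (show (6*T-a-b : ℤ) = max (max T (3*T-a)) (max (3*T-b) (6*T-a-b)) by omega)]
    push_cast; ring
  have hc2 : ∀ b ∈ Finset.Ioc (3*T:ℤ) (A), F A T a b
      = (1 + (1/2)*(a:ℝ) + (-1/2)*(a:ℝ)^2 + (-3/2)*(T:ℝ) + 3*(T:ℝ)*(a:ℝ) + (-9/2)*(T:ℝ)^2 + 2*(A:ℝ) + 1*(A:ℝ)^2) + (0:ℝ)*(b:ℝ) + (0:ℝ)*(b:ℝ)^2 + (0:ℝ)*(b:ℝ)^3 := by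
    intro b hb
    simp only [Finset.mem_Ioc] at hb
    rw [cd hT hA (by omega) (by omega) (by omega) (by omega) (by omega)
      (show (0 : ℤ) = max (max 0 (T-a)) (max (T-b) (3*T-a-b)) by omega)
      (show (3*T-a : ℤ) = max (max T (3*T-a)) (max (3*T-b) (6*T-a-b)) by omega)]
    push_cast; ring
  rw [sum_Ioc_split _ (show ((-1):ℤ) ≤ 3*T-a by omega) (show (3*T-a:ℤ) ≤ A by omega), sum_Ioc_split _ (show (3*T-a:ℤ) ≤ 3*T by omega) (show (3*T:ℤ) ≤ A by omega), Finset.sum_congr rfl hc0, Finset.sum_congr rfl hc1, Finset.sum_congr rfl hc2, sum_Ioc_cubic _ _ _ _ (show ((-1):ℤ) ≤ 3*T-a by omega), sum_Ioc_cubic _ _ _ _ (show (3*T-a:ℤ) ≤ 3*T by omega), sum_Ioc_cubic _ _ _ _ (show (3*T:ℤ) ≤ A by omega)]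
  push_cast; ring

lemma bsumIV {A T a : ℤ} (hT : 1 ≤ T) (hA : 3*T ≤ A) (ha : 0 ≤ a ∧ a ≤ T-1) :
    ∑ b ∈ Finset.Ioc (-1:ℤ) A, F A T a b = (1 + (11/6)*(a:ℝ) + 1*(a:ℝ)^2 + (1/6)*(a:ℝ)^3 + (-9/2)*(T:ℝ) + (-15/2)*(T:ℝ)*(a:ℝ) + (-3)*(T:ℝ)*(a:ℝ)^2 + 3*(T:ℝ)^2 + (9/2)*(T:ℝ)^2*(a:ℝ) + (-1/2)*(T:ℝ)^3 + 3*(A:ℝ) + (9/2)*(A:ℝ)*(a:ℝ) + (3/2)*(A:ℝ)*(a:ℝ)^2 + (-15/2)*(A:ℝ)*(T:ℝ) + (-9)*(A:ℝ)*(T:ℝ)*(a:ℝ) + (3/2)*(A:ℝ)*(T:ℝ)^2 + 3*(A:ℝ)^2 + 3*(A:ℝ)^2*(a:ℝ) + (-3)*(A:ℝ)^2*(T:ℝ) + 1*(A:ℝ)^3) := by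
  have hc0 : ∀ b ∈ Finset.Ioc ((-1):ℤ) (T-a-1), F A T a b = 0 := by
    intro b hb
    simp only [Finset.mem_Ioc] at hb
    exact F_zero (by omega)
  have hc1 : ∀ b ∈ Finset.Ioc (T-a-1:ℤ) (2*T), F A T a b
      = (1 + (3/2)*(a:ℝ) + (1/2)*(a:ℝ)^2 + (-6)*(T:ℝ) + (-6)*(T:ℝ)*(a:ℝ) + 9*(T:ℝ)^2 + 2*(A:ℝ) + 2*(A:ℝ)*(a:ℝ) + (-6)*(A:ℝ)*(T:ℝ) + 1*(A:ℝ)^2) + ((3/2) + 1*(a:ℝ) + (-6)*(T:ℝ) + 2*(A:ℝ))*(b:ℝ) + ((1/2))*(b:ℝ)^2 + (0:ℝ)*(b:ℝ)^3 := by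
    intro b hb
    simp only [Finset.mem_Ioc] at hb
    rw [cd hT hA (by omega) (by omega) (by omega) (by omega) (by omega)
      (show (3*T-a-b : ℤ) = max (max 0 (T-a)) (max (T-b) (3*T-a-b)) by omega)
      (show (6*T-a-b : ℤ) = max (max T (3*T-a)) (max (3*T-b) (6*T-a-b)) by omega)]
    push_cast; ring
  have hc2 : ∀ b ∈ Finset.Ioc (2*T:ℤ) (3*T), F A T a b
      = (1 + (3/2)*(a:ℝ) + (1/2)*(a:ℝ)^2 + (-4)*(T:ℝ) + (-6)*(T:ℝ)*(a:ℝ) + (-7)*(T:ℝ)^2 + 2*(A:ℝ) + 2*(A:ℝ)*(a:ℝ) + (-2)*(A:ℝ)*(T:ℝ) + 1*(A:ℝ)^2) + ((1/2) + 1*(a:ℝ) + 4*(T:ℝ))*(b:ℝ) + ((-1/2))*(b:ℝ)^2 + (0:ℝ)*(b:ℝ)^3 := by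
    intro b hb
    simp only [Finset.mem_Ioc] at hb
    rw [cd hT hA (by omega) (by omega) (by omega) (by omega) (by omega)
      (show (T-a : ℤ) = max (max 0 (T-a)) (max (T-b) (3*T-a-b)) by omega)
      (show (6*T-a-b : ℤ) = max (max T (3*T-a)) (max (3*T-b) (6*T-a-b)) by omega)]
    push_cast; ring
  have hc3 : ∀ b ∈ Finset.Ioc (3*T:ℤ) (A), F A T a b
      = (1 + (3/2)*(a:ℝ) + (1/2)*(a:ℝ)^2 + (-5/2)*(T:ℝ) + (-3)*(T:ℝ)*(a:ℝ) + (1/2)*(T:ℝ)^2 + 2*(A:ℝ) + 2*(A:ℝ)*(a:ℝ) + (-2)*(A:ℝ)*(T:ℝ) + 1*(A:ℝ)^2) + (0:ℝ)*(b:ℝ) + (0:ℝ)*(b:ℝ)^2 + (0:ℝ)*(b:ℝ)^3 := by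
    intro b hb
    simp only [Finset.mem_Ioc] at hb
    rw [cd hT hA (by omega) (by omega) (by omega) (by omega) (by omega)
      (show (T-a : ℤ) = max (max 0 (T-a)) (max (T-b) (3*T-a-b)) by omega)
      (show (3*T-a : ℤ) = max (max T (3*T-a)) (max (3*T-b) (6*T-a-b)) by omega)]
    push_cast; ring
  rw [sum_Ioc_split _ (show ((-1):ℤ) ≤ T-a-1 by omega) (show (T-a-1:ℤ) ≤ A by omega), sum_Ioc_split _ (show (T-a-1:ℤ) ≤ 2*T by omega) (show (2*T:ℤ) ≤ A by omega), sum_Ioc_split _ (show (2*T:ℤ) ≤ 3*T by omega) (show (3*T:ℤ) ≤ A by omega), Finset.sum_congr rfl hc0, Finset.sum_congr rfl hc1, Finset.sum_congr rfl hc2, Finset.sum_congr rfl hc3, Finset.sum_const_zero, sum_Ioc_cubic _ _ _ _ (show (T-a-1:ℤ) ≤ 2*T by omega), sum_Ioc_cubic _ _ _ _ (show (2*T:ℤ) ≤ 3*T by omega), sum_Ioc_cubic _ _ _ _ (show (3*T:ℤ) ≤ A by omega)]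
  push_cast; ring

lemma count_core (A T : ℤ) (hT : 1 ≤ T) (hA : 3*T ≤ A) :
    ∑ a ∈ Finset.Ioc (-1:ℤ) A, ∑ b ∈ Finset.Ioc (-1:ℤ) A, F A T a b
      = (1 + (-3)*(T:ℝ) + (-9/4)*(T:ℝ)^2 + (-5/2)*(T:ℝ)^3 + (-9/4)*(T:ℝ)^4 + 4*(A:ℝ) + (-6)*(A:ℝ)*(T:ℝ) + (-6)*(A:ℝ)*(T:ℝ)^2 + (-4)*(A:ℝ)*(T:ℝ)^3 + 6*(A:ℝ)^2 + (-3)*(A:ℝ)^2*(T:ℝ) + (-3)*(A:ℝ)^2*(T:ℝ)^2 + 4*(A:ℝ)^3 + 1*(A:ℝ)^4) := by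
  have hd0 : ∀ a ∈ Finset.Ioc ((-1):ℤ) (T-1), (∑ b ∈ Finset.Ioc (-1:ℤ) A, F A T a b)
      = (1 + (-9/2)*(T:ℝ) + 3*(T:ℝ)^2 + (-1/2)*(T:ℝ)^3 + 3*(A:ℝ) + (-15/2)*(A:ℝ)*(T:ℝ) + (3/2)*(A:ℝ)*(T:ℝ)^2 + 3*(A:ℝ)^2 + (-3)*(A:ℝ)^2*(T:ℝ) + 1*(A:ℝ)^3) + ((11/6) + (-15/2)*(T:ℝ) + (9/2)*(T:ℝ)^2 + (9/2)*(A:ℝ) + (-9)*(A:ℝ)*(T:ℝ) + 3*(A:ℝ)^2)*(a:ℝ) + (1 + (-3)*(T:ℝ) + (3/2)*(A:ℝ))*(a:ℝ)^2 + ((1/6))*(a:ℝ)^3 := by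
    intro a ha
    simp only [Finset.mem_Ioc] at ha
    rw [bsumIV hT hA ⟨by omega, by omega⟩]
    ring
  have hd1 : ∀ a ∈ Finset.Ioc (T-1:ℤ) (2*T-1), (∑ b ∈ Finset.Ioc (-1:ℤ) A, F A T a b)
      = (1 + (-7/2)*(T:ℝ) + (-9/2)*(T:ℝ)^2 + 18*(T:ℝ)^3 + 3*(A:ℝ) + (-9/2)*(A:ℝ)*(T:ℝ) + (-27/2)*(A:ℝ)*(T:ℝ)^2 + 3*(A:ℝ)^2 + 1*(A:ℝ)^3) + ((5/6) + (3/2)*(T:ℝ) + (-45/2)*(T:ℝ)^2 + (3/2)*(A:ℝ) + 9*(A:ℝ)*(T:ℝ))*(a:ℝ) + ((-1/2) + 6*(T:ℝ) + (-3/2)*(A:ℝ))*(a:ℝ)^2 + ((-1/3))*(a:ℝ)^3 := by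
    intro a ha
    simp only [Finset.mem_Ioc] at ha
    rw [bsumIII hT hA ⟨by omega, by omega⟩]
    ring
  have hd2 : ∀ a ∈ Finset.Ioc (2*T-1:ℤ) (3*T-1), (∑ b ∈ Finset.Ioc (-1:ℤ) A, F A T a b)
      = (1 + (-5/2)*(T:ℝ) + (-21/2)*(T:ℝ)^2 + (-28)*(T:ℝ)^3 + 3*(A:ℝ) + (-3/2)*(A:ℝ)*(T:ℝ) + (-3/2)*(A:ℝ)*(T:ℝ)^2 + 3*(A:ℝ)^2 + 1*(A:ℝ)^3) + ((1/3) + (9/2)*(T:ℝ) + (33/2)*(T:ℝ)^2)*(a:ℝ) + ((-1/2) + (-3)*(T:ℝ))*(a:ℝ)^2 + ((1/6))*(a:ℝ)^3 := by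
    intro a ha
    simp only [Finset.mem_Ioc] at ha
    rw [bsumII hT hA ⟨by omega, by omega⟩]
    ring
  have hd3 : ∀ a ∈ Finset.Ioc (3*T-1:ℤ) (A), (∑ b ∈ Finset.Ioc (-1:ℤ) A, F A T a b)
      = (1 + (-3/2)*(T:ℝ) + (-3/2)*(T:ℝ)^2 + (-1)*(T:ℝ)^3 + 3*(A:ℝ) + (-3/2)*(A:ℝ)*(T:ℝ) + (-3/2)*(A:ℝ)*(T:ℝ)^2 + 3*(A:ℝ)^2 + 1*(A:ℝ)^3) + (0:ℝ)*(a:ℝ) + (0:ℝ)*(a:ℝ)^2 + (0:ℝ)*(a:ℝ)^3 := by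
    intro a ha
    simp only [Finset.mem_Ioc] at ha
    rw [bsumI hT hA ⟨by omega, by omega⟩]
    ring
  rw [sum_Ioc_split _ (show ((-1):ℤ) ≤ T-1 by omega) (show (T-1:ℤ) ≤ A by omega), sum_Ioc_split _ (show (T-1:ℤ) ≤ 2*T-1 by omega) (show (2*T-1:ℤ) ≤ A by omega), sum_Ioc_split _ (show (2*T-1:ℤ) ≤ 3*T-1 by omega) (show (3*T-1:ℤ) ≤ A by omega), Finset.sum_congr rfl hd0, Finset.sum_congr rfl hd1, Finset.sum_congr rfl hd2, Finset.sum_congr rfl hd3, sum_Ioc_cubic _ _ _ _ (show ((-1):ℤ) ≤ T-1 by omega), sum_Ioc_cubic _ _ _ _ (show (T-1:ℤ) ≤ 2*T-1 by omega), sum_Ioc_cubic _ _ _ _ (show (2*T-1:ℤ) ≤ 3*T-1 by omega), sum_Ioc_cubic _ _ _ _ (show (3*T-1:ℤ) ≤ A by omega)]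
  push_cast; ring




lemma sumlit (f : Fin 4 → ℤ) :
    (∑ i ∈ ({0} : Finset (Fin 4)), f i) = f 0 ∧
    (∑ i ∈ ({1} : Finset (Fin 4)), f i) = f 1 ∧
    (∑ i ∈ ({2} : Finset (Fin 4)), f i) = f 2 ∧
    (∑ i ∈ ({3} : Finset (Fin 4)), f i) = f 3 ∧
    (∑ i ∈ ({0,1} : Finset (Fin 4)), f i) = f 0 + f 1 ∧
    (∑ i ∈ ({0,2} : Finset (Fin 4)), f i) = f 0 + f 2 ∧
    (∑ i ∈ ({0,3} : Finset (Fin 4)), f i) = f 0 + f 3 ∧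
    (∑ i ∈ ({1,2} : Finset (Fin 4)), f i) = f 1 + f 2 ∧
    (∑ i ∈ ({1,3} : Finset (Fin 4)), f i) = f 1 + f 3 ∧
    (∑ i ∈ ({2,3} : Finset (Fin 4)), f i) = f 2 + f 3 ∧
    (∑ i ∈ ({0,1,2} : Finset (Fin 4)), f i) = f 0 + f 1 + f 2 ∧
    (∑ i ∈ ({0,1,3} : Finset (Fin 4)), f i) = f 0 + f 1 + f 3 ∧
    (∑ i ∈ ({0,2,3} : Finset (Fin 4)), f i) = f 0 + f 2 + f 3 ∧
    (∑ i ∈ ({1,2,3} : Finset (Fin 4)), f i) = f 1 + f 2 + f 3 ∧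
    (∑ i ∈ ({0,1,2,3} : Finset (Fin 4)), f i) = f 0 + f 1 + f 2 + f 3 := by
  refine ⟨?_, ?_, ?_, ?_, ?_, ?_, ?_, ?_, ?_, ?_, ?_, ?_, ?_, ?_, ?_⟩ <;>
    simp [Finset.sum_insert, Finset.mem_insert, Finset.mem_singleton, Finset.sum_pair] <;> ring

lemma subset_cases : ∀ S : Finset (Fin 4), S = ∅ ∨ S = {0} ∨ S = {1} ∨ S = {2} ∨ S = {3} ∨
    S = {0,1} ∨ S = {0,2} ∨ S = {0,3} ∨ S = {1,2} ∨ S = {1,3} ∨ S = {2,3} ∨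
    S = {0,1,2} ∨ S = {0,1,3} ∨ S = {0,2,3} ∨ S = {1,2,3} ∨ S = {0,1,2,3} := by decide

/-- characterization of lattice points of the dilate -/
lemma mem_dilate {n t : ℕ} (hn : 3 ≤ n) (ht : 0 < t) (x : Fin 4 → ℤ) :
    ((fun i => (x i : ℝ)) ∈ (t : ℝ) • partialPermutohedron 4 n) ↔
      ((∀ i, 0 ≤ x i) ∧ ∀ S : Finset (Fin 4),
        2 * ∑ i ∈ S, x i ≤ (t : ℤ) * (2 * S.card * n - S.card * (S.card - 1))) := by
  have htR : (0:ℝ) < t := by exact_mod_cast ht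
  have ht0 : (t:ℝ) ≠ 0 := ne_of_gt htR
  rw [← Qset_eq_hull hn, Set.mem_smul_set_iff_inv_smul_mem₀ ht0]
  simp only [Qset, Set.mem_setOf_eq, Pi.smul_apply, smul_eq_mul]
  constructor
  · rintro ⟨hpos, hsum⟩
    refine ⟨fun i => ?_, fun S => ?_⟩
    · have h1 := hpos i
      have h2 : (t:ℝ) * ((t:ℝ)⁻¹ * ((x i : ℤ) : ℝ)) = ((x i : ℤ) : ℝ) := by field_simp
      have h3 : (0:ℝ) ≤ ((x i : ℤ) : ℝ) := by nlinarith
      exact_mod_cast h3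
    · have hs := hsum S
      rw [← Finset.mul_sum] at hs
      have h2 : (t:ℝ) * ((t:ℝ)⁻¹ * (∑ i ∈ S, ((x i : ℤ) : ℝ))) = ∑ i ∈ S, ((x i : ℤ) : ℝ) := by
        field_simp
      have h3 := mul_le_mul_of_nonneg_left hs htR.le
      rw [h2] at h3
      have h4 : ((2 * ∑ i ∈ S, x i : ℤ) : ℝ)
          ≤ (((t : ℤ) * (2 * S.card * n - S.card * (S.card - 1)) : ℤ) : ℝ) := by
        push_cast
        nlinarith [h3]
      exact_mod_cast h4
  · rintro ⟨hpos, hsum⟩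
    refine ⟨fun i => ?_, fun S => ?_⟩
    · have h1 : (0:ℝ) ≤ ((x i : ℤ) : ℝ) := by exact_mod_cast hpos i
      positivity
    · rw [← Finset.mul_sum, inv_mul_le_iff₀ htR]
      have h4 : ((2 * ∑ i ∈ S, x i : ℤ) : ℝ)
          ≤ (((t : ℤ) * (2 * S.card * n - S.card * (S.card - 1)) : ℤ) : ℝ) := by
        exact_mod_cast hsum S
      push_cast at h4
      nlinarith [h4]

noncomputable def S4 (A T : ℤ) : Finset ((ℤ×ℤ)×(ℤ×ℤ)) :=
  ((Finset.Ioc (-1) A ×ˢ Finset.Ioc (-1) A) ×ˢ (Finset.Ioc (-1) A ×ˢ Finset.Ioc (-1) A)).filter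
    (fun p => Pu A T p.1.1 p.1.2 p.2.1 p.2.2)

lemma card_S4 (A T : ℤ) (hT : 1 ≤ T) (hA : 3*T ≤ A) :
    (((S4 A T).card : ℕ) : ℝ)
      = ((1:ℝ) + (-3)*(T:ℝ) + (-9/4)*(T:ℝ)^2 + (-5/2)*(T:ℝ)^3 + (-9/4)*(T:ℝ)^4 + 4*(A:ℝ) + (-6)*(A:ℝ)*(T:ℝ) + (-6)*(A:ℝ)*(T:ℝ)^2 + (-4)*(A:ℝ)*(T:ℝ)^3 + 6*(A:ℝ)^2 + (-3)*(A:ℝ)^2*(T:ℝ) + (-3)*(A:ℝ)^2*(T:ℝ)^2 + 4*(A:ℝ)^3 + 1*(A:ℝ)^4) := by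
  rw [← count_core A T hT hA]
  calc (((S4 A T).card : ℕ) : ℝ)
      = ∑ p ∈ ((Finset.Ioc (-1) A ×ˢ Finset.Ioc (-1) A) ×ˢ
          (Finset.Ioc (-1) A ×ˢ Finset.Ioc (-1) A)),
          (if Pu A T p.1.1 p.1.2 p.2.1 p.2.2 then (1:ℝ) else 0) := by
        unfold S4
        rw [Finset.card_filter]
        push_cast
        rfl
    _ = ∑ u ∈ (Finset.Ioc (-1) A ×ˢ Finset.Ioc (-1) A),
          ∑ v ∈ (Finset.Ioc (-1) A ×ˢ Finset.Ioc (-1) A),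
          (if Pu A T u.1 u.2 v.1 v.2 then (1:ℝ) else 0) := Finset.sum_product _ _ _
    _ = ∑ a ∈ Finset.Ioc (-1:ℤ) A, ∑ b ∈ Finset.Ioc (-1:ℤ) A,
          (∑ v ∈ (Finset.Ioc (-1) A ×ˢ Finset.Ioc (-1) A),
          (if Pu A T a b v.1 v.2 then (1:ℝ) else 0)) := Finset.sum_product _ _ _
    _ = ∑ a ∈ Finset.Ioc (-1:ℤ) A, ∑ b ∈ Finset.Ioc (-1:ℤ) A, F A T a b := by
        refine Finset.sum_congr rfl fun a _ => Finset.sum_congr rfl fun b _ => ?_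
        rw [Finset.sum_product _ _ _]
        rfl

end EhrhartAux


set_option maxHeartbeats 2000000 in
theorem ehrhart_P4n (n t : ℕ) (hn : 3 ≤ n) (ht : 0 < t) :
    (latticeCount 4 n t : ℝ) =
      ((n : ℝ) ^ 4 - 3 * (n : ℝ) ^ 2 - 4 * (n : ℝ) - 9 / 4) * (t : ℝ) ^ 4 +
        (4 * (n : ℝ) ^ 3 - 3 * (n : ℝ) ^ 2 - 6 * (n : ℝ) - 5 / 2) * (t : ℝ) ^ 3 +
        (6 * (n : ℝ) ^ 2 - 6 * (n : ℝ) - 9 / 4) * (t : ℝ) ^ 2 +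
        (4 * (n : ℝ) - 3) * (t : ℝ) + 1 := by
  classical
  set A : ℤ := (t : ℤ) * (n : ℤ) with hAdef
  have hT : 1 ≤ (t:ℤ) := by exact_mod_cast ht
  have hnZ : (3:ℤ) ≤ (n:ℤ) := by exact_mod_cast hn
  have hA3 : 3*(t:ℤ) ≤ A := by rw [hAdef]; nlinarith
  have hΦinj : Function.Injective (fun x : Fin 4 → ℤ =>
      ((A - x 0, A - x 1), (A - x 2, A - x 3))) := by
    intro x y h
    simp only [Prod.mk.injEq] at h
    obtain ⟨⟨h1, h2⟩, h3, h4⟩ := h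
    have e0 : x 0 = y 0 := by omega
    have e1 : x 1 = y 1 := by omega
    have e2 : x 2 = y 2 := by omega
    have e3 : x 3 = y 3 := by omega
    funext i
    fin_cases i
    exacts [e0, e1, e2, e3]
  have hchar : {x : Fin 4 → ℤ | (fun i => (x i : ℝ)) ∈ (t : ℝ) • partialPermutohedron 4 n}
      = {x : Fin 4 → ℤ | (∀ i, 0 ≤ x i) ∧ ∀ S : Finset (Fin 4),
          2 * ∑ i ∈ S, x i ≤ (t : ℤ) * (2 * S.card * n - S.card * (S.card - 1))} :=
    Set.ext fun x => EhrhartAux.mem_dilate hn ht x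
  have himg : (fun x : Fin 4 → ℤ => ((A - x 0, A - x 1), (A - x 2, A - x 3))) ''
        {x : Fin 4 → ℤ | (∀ i, 0 ≤ x i) ∧ ∀ S : Finset (Fin 4),
          2 * ∑ i ∈ S, x i ≤ (t : ℤ) * (2 * S.card * n - S.card * (S.card - 1))}
      = ↑(EhrhartAux.S4 A (t:ℤ)) := by
    ext p
    simp only [Set.mem_image, Set.mem_setOf_eq, Finset.coe_filter, EhrhartAux.S4,
      Finset.mem_coe, Finset.mem_filter, Finset.mem_product, Finset.mem_Ioc]
    constructor
    · rintro ⟨x, ⟨hpos, hsum⟩, rfl⟩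
      obtain ⟨hs1, hs2, hs3, hs4, hs5, hs6, hs7, hs8, hs9, hs10, hs11, hs12, hs13, hs14, hs15⟩ :=
        EhrhartAux.sumlit x
      have c1 := hsum {0}; have c2 := hsum {1}; have c3 := hsum {2}; have c4 := hsum {3}
      have c5 := hsum {0,1}; have c6 := hsum {0,2}; have c7 := hsum {0,3}
      have c8 := hsum {1,2}; have c9 := hsum {1,3}; have c10 := hsum {2,3}
      have c11 := hsum {0,1,2}; have c12 := hsum {0,1,3}; have c13 := hsum {0,2,3}
      have c14 := hsum {1,2,3}; have c15 := hsum {0,1,2,3}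
      rw [hs1] at c1; rw [hs2] at c2; rw [hs3] at c3; rw [hs4] at c4
      rw [hs5] at c5; rw [hs6] at c6; rw [hs7] at c7; rw [hs8] at c8
      rw [hs9] at c9; rw [hs10] at c10; rw [hs11] at c11; rw [hs12] at c12
      rw [hs13] at c13; rw [hs14] at c14; rw [hs15] at c15
      simp only [(by decide : ({0} : Finset (Fin 4)).card = 1), (by decide : ({1} : Finset (Fin 4)).card = 1), (by decide : ({2} : Finset (Fin 4)).card = 1), (by decide : ({3} : Finset (Fin 4)).card = 1), (by decide : ({0,1} : Finset (Fin 4)).card = 2), (by decide : ({0,2} : Finset (Fin 4)).card = 2), (by decide : ({0,3} : Finset (Fin 4)).card = 2), (by decide : ({1,2} : Finset (Fin 4)).card = 2), (by decide : ({1,3} : Finset (Fin 4)).card = 2), (by decide : ({2,3} : Finset (Fin 4)).card = 2), (by decide : ({0,1,2} : Finset (Fin 4)).card = 3), (by decide : ({0,1,3} : Finset (Fin 4)).card = 3), (by decide : ({0,2,3} : Finset (Fin 4)).card = 3), (by decide : ({1,2,3} : Finset (Fin 4)).card = 3), (by decide : ({0,1,2,3} : Finset (Fin 4)).card = 4)]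 at c1 c2 c3 c4 c5 c6 c7 c8 c9 c10 c11 c12 c13 c14 c15
      push_cast at c1 c2 c3 c4 c5 c6 c7 c8 c9 c10 c11 c12 c13 c14 c15
      have b1 : x 0 ≤ A := by linarith [hAdef]
      have b2 : x 1 ≤ A := by linarith [hAdef]
      have b3 : x 2 ≤ A := by linarith [hAdef]
      have b4 : x 3 ≤ A := by linarith [hAdef]
      have q5 : 2*(x 0 + x 1) ≤ 4*A - 2*(t:ℤ) := by linarith [hAdef]
      have q6 : 2*(x 0 + x 2) ≤ 4*A - 2*(t:ℤ) := by linarith [hAdef]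
      have q7 : 2*(x 0 + x 3) ≤ 4*A - 2*(t:ℤ) := by linarith [hAdef]
      have q8 : 2*(x 1 + x 2) ≤ 4*A - 2*(t:ℤ) := by linarith [hAdef]
      have q9 : 2*(x 1 + x 3) ≤ 4*A - 2*(t:ℤ) := by linarith [hAdef]
      have q10 : 2*(x 2 + x 3) ≤ 4*A - 2*(t:ℤ) := by linarith [hAdef]
      have q11 : 2*(x 0 + x 1 + x 2) ≤ 6*A - 6*(t:ℤ) := by linarith [hAdef]
      have q12 : 2*(x 0 + x 1 + x 3) ≤ 6*A - 6*(t:ℤ) := by linarith [hAdef]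
      have q13 : 2*(x 0 + x 2 + x 3) ≤ 6*A - 6*(t:ℤ) := by linarith [hAdef]
      have q14 : 2*(x 1 + x 2 + x 3) ≤ 6*A - 6*(t:ℤ) := by linarith [hAdef]
      have q15 : 2*(x 0 + x 1 + x 2 + x 3) ≤ 8*A - 12*(t:ℤ) := by linarith [hAdef]
      have hp0 := hpos 0; have hp1 := hpos 1; have hp2 := hpos 2; have hp3 := hpos 3
      clear c1 c2 c3 c4 c5 c6 c7 c8 c9 c10 c11 c12 c13 c14 c15 hsum hchar hAdef hA3
      dsimp only
      refine ⟨⟨⟨⟨?_, ?_⟩, ?_, ?_⟩, ⟨?_, ?_⟩, ?_, ?_⟩, ?_⟩ <;>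
        first
          | omega
          | (unfold EhrhartAux.Pu; refine ⟨?_, ?_, ?_, ?_, ?_, ?_, ?_, ?_, ?_, ?_, ?_⟩ <;> omega)
    · rintro ⟨⟨⟨⟨ha1, ha2⟩, hb1, hb2⟩, ⟨hc1, hc2⟩, hd1, hd2⟩, hPu⟩
      obtain ⟨⟨a, b⟩, ⟨c, d⟩⟩ := p
      unfold EhrhartAux.Pu at hPu
      simp only at ha1 ha2 hb1 hb2 hc1 hc2 hd1 hd2 hPu
      obtain ⟨g1, g2, g3, g4, g5, g6, g7, g8, g9, g10, g11⟩ := hPu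
      refine ⟨![A - a, A - b, A - c, A - d], ⟨?_, ?_⟩, ?_⟩
      · intro i; fin_cases i <;> simp <;> omega
      · intro S
        obtain ⟨hs1, hs2, hs3, hs4, hs5, hs6, hs7, hs8, hs9, hs10, hs11, hs12, hs13, hs14, hs15⟩ :=
          EhrhartAux.sumlit ![A - a, A - b, A - c, A - d]
        have hm0 : (![A - a, A - b, A - c, A - d] : Fin 4 → ℤ) 0 = A - a := rfl
        have hm1 : (![A - a, A - b, A - c, A - d] : Fin 4 → ℤ) 1 = A - b := rfl
        have hm2 : (![A - a, A - b, A - c, A - d] : Fin 4 → ℤ) 2 = A - c := rfl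
        have hm3 : (![A - a, A - b, A - c, A - d] : Fin 4 → ℤ) 3 = A - d := rfl
        rcases EhrhartAux.subset_cases S with rfl | rfl | rfl | rfl | rfl | rfl | rfl | rfl | rfl | rfl |
          rfl | rfl | rfl | rfl | rfl | rfl <;>
          simp only [hs1, hs2, hs3, hs4, hs5, hs6, hs7, hs8, hs9, hs10, hs11, hs12, hs13, hs14,
            hs15, hm0, hm1, hm2, hm3, Finset.sum_empty, Finset.card_empty, (by decide : ({0} : Finset (Fin 4)).card = 1), (by decide : ({1} : Finset (Fin 4)).card = 1), (by decide : ({2} : Finset (Fin 4)).card = 1), (by decide : ({3} : Finset (Fin 4)).card = 1), (by decide : ({0,1} : Finset (Fin 4)).card = 2), (by decide : ({0,2} : Finset (Fin 4)).card = 2), (by decide : ({0,3} : Finset (Fin 4)).card = 2), (by decide : ({1,2} : Finset (Fin 4)).card = 2), (by decide : ({1,3} : Finset (Fin 4)).card = 2), (by decide : ({2,3} : Finset (Fin 4)).card = 2), (by decide : ({0,1,2} : Finset (Fin 4)).card = 3), (by decide : ({0,1,3} : Finset (Fin 4)).card = 3), (by decide : ({0,2,3} : Finset (Fin 4)).card =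 3), (by decide : ({1,2,3} : Finset (Fin 4)).card = 3), (by decide : ({0,1,2,3} : Finset (Fin 4)).card = 4)] <;>
          push_cast <;>
          linarith [hAdef]
      · simp only [Matrix.cons_val_zero, Matrix.cons_val_one, Matrix.head_cons,
          Matrix.cons_val_two, Matrix.tail_cons, Matrix.cons_val_three, Prod.mk.injEq]
        refine ⟨⟨by omega, by omega⟩, by omega, by omega⟩
  unfold latticeCount
  rw [hchar, ← Set.ncard_image_of_injective _ hΦinj, himg, Set.ncard_coe_finset]
  rw [EhrhartAux.card_S4 A (t:ℤ) hT hA3]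
  rw [hAdef]
  push_cast
  ring
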